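/- (Orthoplex bound, real case) Let φ_1, ..., φ_N be unit vectors in ℝ^M with N > M(M+1)/2. Then the coherence satisfies max_{j ≠ l} |⟨φ_j, φ_l⟩| ≥ 1/√M. -/

import Mathlib

lemma real_posPart_mul_negPart (a : ℝ) : a⁺ * a⁻ = 0 := by
  rcases le_total a 0 with h1 | h1
  · rw [posPart_eq_zero.mpr h1, zero_mul]
  · rw [negPart_eq_zero.mpr h1, mul_zero]

open Finset in
lemma linIndep_of_pairwise_neg_inner {E : Type*} [NormedAddCommGroup E] [InnerProductSpace ℝ E]
    {n : ℕ} (v : Fin (n+1) → E)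
    (h : ∀ i j, i ≠ j → (inner ℝ (v i) (v j) : ℝ) < 0) :
    LinearIndependent ℝ (fun i : Fin n => v i.castSucc) := by
  rw [Fintype.linearIndependent_iff]
  intro c hc
  set P : E := ∑ i, (c i)⁺ • v i.castSucc with hP
  set Q : E := ∑ i, (c i)⁻ • v i.castSucc with hQ
  have hPQ : P = Q := by
    have h0 : P - Q = 0 := by
      rw [hP, hQ, ← Finset.sum_sub_distrib, ← hc]
      refine Finset.sum_congr rfl fun i _ => ?_
      rw [← sub_smul, posPart_sub_negPart]
    rw [sub_eq_zero] at h0; exact h0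
  have key : (inner ℝ P Q : ℝ) ≤ 0 := by
    rw [hP, hQ, sum_inner]
    refine Finset.sum_nonpos fun i _ => ?_
    rw [real_inner_smul_left, inner_sum, Finset.mul_sum]
    refine Finset.sum_nonpos fun j _ => ?_
    rw [real_inner_smul_right]
    rcases eq_or_ne i j with rfl | hij
    · rw [← mul_assoc, real_posPart_mul_negPart, zero_mul]
    · have := h i.castSucc j.castSucc (by simpa using hij)
      have h1 : (c j)⁻ * (inner ℝ (v i.castSucc) (v j.castSucc) : ℝ) ≤ 0 :=
        mul_nonpos_of_nonneg_of_nonpos (negPart_nonneg _) this.le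
      exact mul_nonpos_of_nonneg_of_nonpos (posPart_nonneg _) h1
  have hP0 : P = 0 := by
    have : (inner ℝ P P : ℝ) ≤ 0 := by rw [hPQ] at key ⊢; exact key
    exact real_inner_self_nonpos.mp this
  have hQ0 : Q = 0 := hPQ ▸ hP0
  intro i
  have hpos : (c i)⁺ = 0 := by
    have h1 : (inner ℝ P (v (Fin.last n)) : ℝ) = 0 := by rw [hP0, inner_zero_left]
    rw [hP, sum_inner] at h1
    have h2 : ∀ j ∈ Finset.univ, ((inner ℝ ((c j)⁺ • v j.castSucc) (v (Fin.last n))) : ℝ) ≤ 0 :=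
      fun j _ => by
        rw [real_inner_smul_left]
        exact mul_nonpos_of_nonneg_of_nonpos (posPart_nonneg _)
          (h _ _ (Fin.ne_last_of_lt j.castSucc_lt_last) |>.le)
    have h3 := (Finset.sum_eq_zero_iff_of_nonpos h2).mp h1 i (Finset.mem_univ i)
    rw [real_inner_smul_left] at h3
    have hne : (inner ℝ (v i.castSucc) (v (Fin.last n)) : ℝ) < 0 :=
      h _ _ (Fin.ne_last_of_lt i.castSucc_lt_last)
    rcases mul_eq_zero.mp h3 with h4 | h4
    · exact h4
    · exact absurd h4 hne.ne
  have hneg : (c i)⁻ = 0 := by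
    have h1 : (inner ℝ Q (v (Fin.last n)) : ℝ) = 0 := by rw [hQ0, inner_zero_left]
    rw [hQ, sum_inner] at h1
    have h2 : ∀ j ∈ Finset.univ, ((inner ℝ ((c j)⁻ • v j.castSucc) (v (Fin.last n))) : ℝ) ≤ 0 :=
      fun j _ => by
        rw [real_inner_smul_left]
        exact mul_nonpos_of_nonneg_of_nonpos (negPart_nonneg _)
          (h _ _ (Fin.ne_last_of_lt j.castSucc_lt_last) |>.le)
    have h3 := (Finset.sum_eq_zero_iff_of_nonpos h2).mp h1 i (Finset.mem_univ i)
    rw [real_inner_smul_left] at h3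
    have hne : (inner ℝ (v i.castSucc) (v (Fin.last n)) : ℝ) < 0 :=
      h _ _ (Fin.ne_last_of_lt i.castSucc_lt_last)
    rcases mul_eq_zero.mp h3 with h4 | h4
    · exact h4
    · exact absurd h4 hne.ne
  have := posPart_sub_negPart (c i)
  rw [hpos, hneg] at this
  simpa using this.symm


theorem orthoplex_bound_real {M N : ℕ} (hN : M * (M + 1) / 2 < N)
    (φ : Fin N → EuclideanSpace ℝ (Fin M))
    (hunit : ∀ j, ‖φ j‖ = 1) :
    ∃ j l, j ≠ l ∧ 1 / Real.sqrt M ≤ |(inner ℝ (φ j) (φ l) : ℝ)| := by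
  -- M = 0 is impossible
  rcases Nat.eq_zero_or_pos M with hM0 | hM
  · subst hM0
    have := hunit ⟨0, by omega⟩
    rw [Subsingleton.elim (φ ⟨0, by omega⟩) 0, norm_zero] at this
    exact absurd this.symm one_ne_zero
  by_contra hcon
  push_neg at hcon
  obtain ⟨n, rfl⟩ := Nat.exists_eq_succ_of_ne_zero (show N ≠ 0 by omega)
  -- notation
  set s : Fin (n+1) → Fin (n+1) → ℝ := fun j l => ∑ a, φ j a * φ l a with hs
  have hinner_eq : ∀ j l, (inner ℝ (φ j) (φ l) : ℝ) = s j l := by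
    intro j l
    rw [PiLp.inner_apply]
    simp [RCLike.inner_apply]
    exact Finset.sum_congr rfl fun _ _ => mul_comm _ _
  have hsum1 : ∀ j, s j j = 1 := by
    intro j
    have h1 : (inner ℝ (φ j) (φ j) : ℝ) = 1 := by
      rw [real_inner_self_eq_norm_mul_norm, hunit j, one_mul]
    rw [← hinner_eq, h1]
  have hsmall : ∀ j l, j ≠ l → s j l * s j l < 1 / M := by
    intro j l hjl
    have h1 := hcon j l hjl
    rw [hinner_eq] at h1
    have h2 : |s j l| * |s j l| < (1 / Real.sqrt M) * (1 / Real.sqrt M) :=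
      mul_self_lt_mul_self (abs_nonneg _) h1
    calc s j l * s j l = |s j l| * |s j l| := (abs_mul_abs_self _).symm
      _ < (1 / Real.sqrt M) * (1 / Real.sqrt M) := h2
      _ = 1 / M := by
          rw [div_mul_div_comm, one_mul, Real.mul_self_sqrt (Nat.cast_nonneg M)]
  -- the traceless outer products, as plain functions
  set t : Fin (n+1) → (Fin M × Fin M → ℝ) :=
    fun j p => φ j p.1 * φ j p.2 - (if p.1 = p.2 then 1 / (M:ℝ) else 0) with ht
  set T : Fin (n+1) → EuclideanSpace ℝ (Fin M × Fin M) :=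
    fun j => (WithLp.equiv 2 _).symm (t j) with hT
  have hMne : (M:ℝ) ≠ 0 := Nat.cast_ne_zero.mpr (by omega)
  have hTinner : ∀ j l, (inner ℝ (T j) (T l) : ℝ) = s j l * s j l - 1 / M := by
    intro j l
    rw [PiLp.inner_apply]
    have happ : ∀ (j : Fin (n+1)) p, (T j) p = t j p := fun j p => rfl
    simp only [RCLike.inner_apply, starRingEnd_apply, star_trivial, happ, ht]
    rw [Fintype.sum_prod_type]
    have hrow : ∀ a : Fin M,
        ∑ b, (φ j a * φ j b - (if a = b then 1/(M:ℝ) else 0)) *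
             (φ l a * φ l b - (if a = b then 1/(M:ℝ) else 0))
        = (φ j a * φ l a) * s j l
          - (φ j a * φ j a) / M - (φ l a * φ l a) / M + 1 / (M^2) := by
      intro a
      have hterm : ∀ b : Fin M,
          (φ j a * φ j b - (if a = b then 1/(M:ℝ) else 0)) *
          (φ l a * φ l b - (if a = b then 1/(M:ℝ) else 0))
          = (φ j a * φ l a) * (φ j b * φ l b)
            + (if b = a then
                (- (φ j a * φ j a) / M - (φ l a * φ l a) / M + 1 / (M^2)) else 0) := by
        intro b
        rcases eq_or_ne a b with rfl | hab
        · simp only [eq_self_iff_true, if_true]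
          ring
        · rw [if_neg hab, if_neg (Ne.symm hab)]
          ring
      rw [Finset.sum_congr rfl (fun b _ => hterm b), Finset.sum_add_distrib,
        Finset.sum_ite_eq' Finset.univ a
          (fun _ => - (φ j a * φ j a) / M - (φ l a * φ l a) / M + 1 / ((M:ℝ)^2)),
        if_pos (Finset.mem_univ a), ← Finset.mul_sum, hs]
      ring
    have hswap : ∀ x y : Fin M, ((φ l x * φ l y - if x = y then 1/(M:ℝ) else 0) *
        (φ j x * φ j y - if x = y then 1/(M:ℝ) else 0)) =
        (φ j x * φ j y - if x = y then 1/(M:ℝ) else 0) *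
        (φ l x * φ l y - if x = y then 1/(M:ℝ) else 0) := fun _ _ => mul_comm _ _
    simp only [hswap]
    rw [Finset.sum_congr rfl (fun a _ => hrow a)]
    simp only [Finset.sum_add_distrib, Finset.sum_sub_distrib, ← Finset.sum_div,
      ← Finset.sum_mul]
    rw [show (∑ a, φ j a * φ l a) = s j l from rfl,
      show (∑ a, φ j a * φ j a) = s j j from rfl,
      show (∑ a, φ l a * φ l a) = s l l from rfl, hsum1, hsum1,
      Finset.sum_const, Finset.card_univ, Fintype.card_fin]
    field_simp
    ring
  have hTneg : ∀ j l, j ≠ l → (inner ℝ (T j) (T l) : ℝ) < 0 := by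
    intro j l hjl
    rw [hTinner]
    have := hsmall j l hjl
    linarith
  have hTli := linIndep_of_pairwise_neg_inner T hTneg
  -- transfer to plain functions
  have htli : LinearIndependent ℝ (fun i : Fin n => t i.castSucc) := by
    have := hTli.map' (WithLp.linearEquiv 2 ℝ (Fin M × Fin M → ℝ)).toLinearMap
      (LinearMap.ker_eq_bot_of_injective (WithLp.linearEquiv 2 ℝ _).injective)
    exact this
  -- the Sym2 functions
  classical
  set g : Fin (n+1) → (Sym2 (Fin M) → ℝ) :=
    fun j => Sym2.lift ⟨fun a b => φ j a * φ j b - (if a = b then 1/(M:ℝ) else 0),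
      by
        intro a b
        dsimp only
        rcases eq_or_ne a b with rfl | hab
        · rfl
        · rw [if_neg hab, if_neg (Ne.symm hab)]; ring⟩ with hg
  set q : Fin M × Fin M → Sym2 (Fin M) := fun p => Sym2.mk p.1 p.2 with hq
  have hgt : ∀ j, (LinearMap.funLeft ℝ ℝ q) (g j) = t j := by
    intro j
    funext p
    simp only [LinearMap.funLeft_apply, hg, hq, ht]
    rw [Sym2.lift_mk]
  have hgli : LinearIndependent ℝ (fun i : Fin n => g i.castSucc) := by
    apply LinearIndependent.of_comp (LinearMap.funLeft ℝ ℝ q)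
    have : (LinearMap.funLeft ℝ ℝ q) ∘ (fun i : Fin n => g i.castSucc)
        = fun i : Fin n => t i.castSucc := by
      funext i; exact hgt _
    rw [this]
    exact htli
  -- the trace functional
  set tr : (Sym2 (Fin M) → ℝ) →ₗ[ℝ] ℝ :=
    { toFun := fun h => ∑ a : Fin M, h (Sym2.diag a)
      map_add' := by intros; simp [Finset.sum_add_distrib]
      map_smul' := by intros; simp [Finset.mul_sum] } with htr
  have hgker : ∀ j, g j ∈ LinearMap.ker tr := by
    intro j
    simp only [LinearMap.mem_ker, htr, LinearMap.coe_mk, AddHom.coe_mk]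
    have : ∀ a : Fin M, g j (Sym2.diag a) = φ j a * φ j a - 1/M := by
      intro a
      simp [hg, Sym2.diag]
    rw [Finset.sum_congr rfl (fun a _ => this a), Finset.sum_sub_distrib,
      show (∑ a, φ j a * φ j a) = s j j from rfl, hsum1,
      Finset.sum_const, Finset.card_univ, Fintype.card_fin, nsmul_eq_mul]
    field_simp
    ring
  have hsurj : Function.Surjective tr := by
    intro r
    refine ⟨((r / (M:ℝ)) • (fun _ => (1:ℝ)) : Sym2 (Fin M) → ℝ), ?_⟩
    simp only [htr, LinearMap.coe_mk, AddHom.coe_mk, Pi.smul_apply, smul_eq_mul, mul_one,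
      Finset.sum_const, Finset.card_univ, Fintype.card_fin, nsmul_eq_mul]
    field_simp
  have hker_rank : Module.finrank ℝ (LinearMap.ker tr) = Fintype.card (Sym2 (Fin M)) - 1 := by
    have h1 := LinearMap.finrank_range_add_finrank_ker tr
    rw [LinearMap.range_eq_top.mpr hsurj, finrank_top, Module.finrank_self,
      Module.finrank_pi] at h1
    omega
  -- restrict to the kernel
  set w : Fin n → LinearMap.ker tr := fun i => ⟨g i.castSucc, hgker _⟩ with hw
  have hwli : LinearIndependent ℝ w := by
    apply LinearIndependent.of_comp (LinearMap.ker tr).subtype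
    exact hgli
  have hcard := hwli.fintype_card_le_finrank
  rw [hker_rank, Fintype.card_fin] at hcard
  have hsym2 : Fintype.card (Sym2 (Fin M)) = M * (M + 1) / 2 := by
    rw [Sym2.card, Fintype.card_fin, Nat.choose_two_right]
    simp [Nat.mul_comm]
  rw [hsym2] at hcard
  have hD1 : 1 ≤ M * (M + 1) / 2 :=
    (Nat.le_div_iff_mul_le (by norm_num)).mpr (by nlinarith)
  generalize hDD : M * (M + 1) / 2 = D at hN hcard hD1
  omega
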